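/- Let G be a finite graph with vertex weights ω taking values in a commutative monoid S and edge weights γ. Then the state-sum V(G) := Σ_{A⊆E(G)} x_{c_1}·x_{c_2}···x_{c_{k(A)}} · ∏_{e∈A} γ_e (where c_i is the sum of the vertex weights in the i-th connected component of the spanning subgraph (V(G),A), and {x_s}_{s∈S} are commuting variables indexed by S) satisfies the deletion-contraction relation V(G) = V(G−e) + γ_e · V(G/e) for every non-loop edge e, where in G/e the new vertex created by contracting e receives as weight the sum of the weights of the two endpoints of e. -/

import Mathlib

open scoped Classical
open Finset

structure VGraph (V E : Type) where
  ends : E → Sym2 V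

namespace VGraph

variable {V E S R : Type} [Fintype V] [Fintype E]

/-- Two vertices are joined by an edge of `A`. -/
def adjRel (G : VGraph V E) (A : Finset E) (u v : V) : Prop :=
  ∃ e ∈ A, G.ends e = s(u, v)

/-- The setoid on vertices whose classes are the connected components of the
spanning subgraph `(V, A)`. -/
def compSetoid (G : VGraph V E) (A : Finset E) : Setoid V :=
  ⟨Relation.EqvGen (G.adjRel A), Relation.EqvGen.is_equivalence _⟩

/-- The connected components of the spanning subgraph `(V, A)`. -/
def Comp (G : VGraph V E) (A : Finset E) : Type := Quotient (G.compSetoid A)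

noncomputable instance (G : VGraph V E) (A : Finset E) : Fintype (G.Comp A) :=
  @Quotient.fintype V _ (G.compSetoid A) (Classical.decRel _)

/-- `k(A)`: the number of connected components of the spanning subgraph `(V, A)`. -/
noncomputable def kA (G : VGraph V E) (A : Finset E) : ℕ := Nat.card (G.Comp A)

/-- `u` and `v` are connected in the spanning subgraph `(V, A)`. -/
def Connects (G : VGraph V E) (A : Finset E) (u v : V) : Prop :=
  Relation.EqvGen (G.adjRel A) u v

/-- The endpoints of `e` are connected in the spanning subgraph `(V, A)`. -/
def EndsConnected (G : VGraph V E) (A : Finset E) (e : E) : Prop :=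
  ∃ u v, G.ends e = s(u, v) ∧ G.Connects A u v

def IsLoop (G : VGraph V E) (e : E) : Prop := (G.ends e).IsDiag

/-- `(V, A)` is a forest (acyclic spanning subgraph): every edge of `A` is a bridge of it. -/
def IsForest (G : VGraph V E) (A : Finset E) : Prop :=
  ∀ e ∈ A, ¬ G.EndsConnected (A.erase e) e

/-- All vertices are pairwise connected using edges of `A`. -/
def ConnectsAll (G : VGraph V E) (A : Finset E) : Prop := ∀ u v, G.Connects A u v

/-- A maximal spanning forest: a forest restricting to a spanning tree of each
connected component of `G`. -/
def IsSpanningTree (G : VGraph V E) (T : Finset E) : Prop :=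
  G.IsForest T ∧ ∀ u v, G.Connects T u v ↔ G.Connects Finset.univ u v

/-- `e ∈ T` is internally active: `e` is minimal in the cut
`{f : (T - e) ∪ {f} ∈ 𝒯(G)}`. -/
def IntActive [LinearOrder E] (G : VGraph V E) (T : Finset E) (e : E) : Prop :=
  e ∈ T ∧ ∀ f, G.IsSpanningTree (insert f (T.erase e)) → e ≤ f

/-- The edge set of the unique cycle of `T ∪ {e}` (when it exists):
`e` together with those `f ∈ T` whose removal disconnects the ends of `e`. -/
noncomputable def cycleEdges (G : VGraph V E) (T : Finset E) (e : E) : Finset E :=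
  insert e (T.filter fun f => ¬ G.EndsConnected (T.erase f) e)

/-- `e ∉ T` is externally active: `T ∪ {e}` contains a cycle through `e` and
`e` is the minimal edge of that cycle. -/
def ExtActive [LinearOrder E] (G : VGraph V E) (T : Finset E) (e : E) : Prop :=
  e ∉ T ∧ G.EndsConnected T e ∧ ∀ f ∈ G.cycleEdges T e, e ≤ f

/-- The vertex set of the component `c` of `(V, A)`. -/
noncomputable def compVerts (G : VGraph V E) (A : Finset E) (c : G.Comp A) : Finset V :=
  Finset.univ.filter fun v => (Quotient.mk (G.compSetoid A) v) = c

/-- The total vertex weight of the component `c` of `(V, A)`. -/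
noncomputable def compWeight [AddCommMonoid S] (G : VGraph V E) (A : Finset E)
    (ω : V → S) (c : G.Comp A) : S :=
  ∑ v ∈ G.compVerts A c, ω v

/-- The V-polynomial, defined by its state sum. -/
noncomputable def Vpoly [AddCommMonoid S] [CommRing R] (G : VGraph V E)
    (ω : V → S) (γ : E → R) : MvPolynomial S R :=
  ∑ A : Finset E, (∏ c : G.Comp A, MvPolynomial.X (G.compWeight A ω c)) *
    MvPolynomial.C (∏ e ∈ A, γ e)

/-- The multivariate Tutte polynomial `Z_T(G; q, γ)` as a polynomial in `q`. -/
noncomputable def ZT [CommRing R] (G : VGraph V E) (γ : E → R) : Polynomial R :=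
  ∑ A : Finset E, Polynomial.X ^ (G.kA A) * Polynomial.C (∏ e ∈ A, γ e)

/-- Deletion of the edge `e`. -/
def del (G : VGraph V E) (e : E) : VGraph V {f : E // f ≠ e} := ⟨fun f => G.ends f.1⟩

/-- Contraction of the edge `e`: vertices are the components of `(V, {e})`. -/
noncomputable def contract (G : VGraph V E) (e : E) : VGraph (G.Comp {e}) {f : E // f ≠ e} :=
  ⟨fun f => (G.ends f.1).map (Quotient.mk (G.compSetoid {e}))⟩

/-- The forest `T` with the edges of `B` contracted: vertices are the components
of `(V, B)` and edges are `T \ B`. -/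
noncomputable def contractIn (G : VGraph V E) (T B : Finset E) :
    VGraph (G.Comp B) ↥(T \ B : Finset E) :=
  ⟨fun f => (G.ends f.1).map (Quotient.mk (G.compSetoid B))⟩

/-- The edges of `G` with both ends inside `P`. -/
noncomputable def edgesIn (G : VGraph V E) (P : Finset V) : Finset E :=
  Finset.univ.filter fun e => ∀ v ∈ G.ends e, v ∈ P

/-- The subgraph of `G` induced by the vertex set `P`. -/
noncomputable def induce (G : VGraph V E) (P : Finset V) : VGraph ↥P ↥(G.edgesIn P) :=
  ⟨fun e => (G.ends e.1).pmap (fun v hv => (⟨v, hv⟩ : ↥P))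
    (by have he := e.2; simp only [edgesIn, Finset.mem_filter] at he; exact he.2)⟩

/-- The block `B` induces a connected subgraph of `G`. -/
def BlockConnected (G : VGraph V E) (B : Finset V) : Prop :=
  ∀ u ∈ B, ∀ v ∈ B, Relation.EqvGen (G.adjRel (G.edgesIn B)) u v

/-- A connected partition of `V(G)`: every vertex lies in exactly one block,
blocks are nonempty, and each block induces a connected subgraph. -/
def IsConnectedPartition (G : VGraph V E) (P : Finset (Finset V)) : Prop :=
  (∀ B ∈ P, B.Nonempty) ∧ (∀ v : V, ∃! B, B ∈ P ∧ v ∈ B) ∧ ∀ B ∈ P, G.BlockConnected B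

/-- The partition `Π(A)` of `V(G)` into the components of `(V, A)`. -/
noncomputable def partitionOf (G : VGraph V E) (A : Finset E) : Finset (Finset V) :=
  Finset.univ.image fun c : G.Comp A => G.compVerts A c

/-- The internally inactive edges of the spanning tree `T`. -/
noncomputable def intInactives [LinearOrder E] (G : VGraph V E) (T : Finset E) : Finset E :=
  T.filter fun e => ¬ G.IntActive T e

/-- The internally active edges of the spanning tree `T`. -/
noncomputable def intActives [LinearOrder E] (G : VGraph V E) (T : Finset E) : Finset E :=
  T.filter fun e => G.IntActive T e

/-- The externally active edges w.r.t. the spanning tree / forest `T`. -/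
noncomputable def extActives [LinearOrder E] (G : VGraph V E) (T : Finset E) : Finset E :=
  Finset.univ.filter fun e => G.ExtActive T e

/-- Kronecker delta `δ(σ_i, σ_j)` for the two ends of the edge `e`. -/
noncomputable def edgeDelta (G : VGraph V E) {q : ℕ} (σ : V → Fin q) (e : E) : ℂ :=
  Sym2.lift ⟨fun u v => if σ u = σ v then 1 else 0, fun u v => by simp [eq_comm]⟩ (G.ends e)

/-- The Potts partition function with variable interactions `J` and
field vectors `M`. -/
noncomputable def Zext (G : VGraph V E) (q : ℕ) (β : ℂ) (J : E → ℂ) (M : V → Fin q → ℂ) : ℂ :=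
  ∑ σ : V → Fin q, Complex.exp (β * ((∑ e : E, J e * G.edgeDelta σ e) +
    ∑ v : V, ∑ α : Fin q, M v α * (if α = σ v then 1 else 0)))

/-- The Potts partition function with constant interaction `J` and constant
field `H` favouring the first spin. -/
noncomputable def ZconstField (G : VGraph V E) (q : ℕ) (β J H : ℂ) : ℂ :=
  ∑ σ : V → Fin q, Complex.exp (β * (J * (∑ e : E, G.edgeDelta σ e) +
    H * ∑ v : V, (if (σ v : ℕ) = 0 then (1 : ℂ) else 0)))

/-- The zero-field Potts partition function with constant interaction `J`. -/
noncomputable def Zzero (G : VGraph V E) (q : ℕ) (β J : ℂ) : ℂ :=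
  ∑ σ : V → Fin q, Complex.exp (β * J * ∑ e : E, G.edgeDelta σ e)

end VGraph

section Aux
open VGraph
set_option linter.unusedSectionVars false
set_option linter.unusedVariables false
variable {V E S R : Type} [Fintype V] [Fintype E]

lemma key {V S R : Type} [Fintype V] [AddCommMonoid S] [CommRing R]
    (t₀ : Setoid V) (t : Setoid V) (s : Setoid (Quotient t₀)) [Fintype (Quotient t₀)]
    (hst : ∀ u v, t.r u v ↔ s.r (Quotient.mk t₀ u) (Quotient.mk t₀ v)) (ω : V → S)
    [Fintype (Quotient t)] [Fintype (Quotient s)] :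
    ∏ c : Quotient t, (MvPolynomial.X (∑ v ∈ @Finset.filter _ (fun v => Quotient.mk t v = c) (fun _ => Classical.propDecidable _) Finset.univ, ω v) : MvPolynomial S R) =
    ∏ d : Quotient s, MvPolynomial.X (∑ w ∈ @Finset.filter _ (fun w => Quotient.mk s w = d) (fun _ => Classical.propDecidable _) Finset.univ, ∑ v ∈ @Finset.filter _ (fun v => Quotient.mk t₀ v = w) (fun _ => Classical.propDecidable _) Finset.univ, ω v) := by
  have f : V → Quotient t₀ := Quotient.mk t₀
  have hf : Function.Surjective (Quotient.mk t₀) := fun d => Quotient.exists_rep d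
  have hlift : ∀ a b : V, t.r a b → Quotient.mk s (Quotient.mk t₀ a) = Quotient.mk s (Quotient.mk t₀ b) :=
    fun a b h => Quotient.sound ((hst a b).1 h)
  set Φ0 : Quotient t → Quotient s := Quotient.lift (fun v => Quotient.mk s (Quotient.mk t₀ v)) hlift with hΦ0
  have hinj : Function.Injective Φ0 := by
    intro a b
    induction a using Quotient.ind
    induction b using Quotient.ind
    intro h
    exact Quotient.sound ((hst _ _).2 (Quotient.exact h))
  have hsurj : Function.Surjective Φ0 := by
    intro d
    induction d using Quotient.ind with
    | _ w =>
      obtain ⟨v, rfl⟩ := hf w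
      exact ⟨Quotient.mk t v, rfl⟩
  set Φ : Quotient t ≃ Quotient s := Equiv.ofBijective Φ0 ⟨hinj, hsurj⟩ with hΦ
  refine Fintype.prod_equiv Φ _ _ fun c => ?_
  congr 1
  have hcond : ∀ v : V, (Quotient.mk s (Quotient.mk t₀ v) = Φ c) ↔ (Quotient.mk t v = c) := by
    intro v
    have h1 : Quotient.mk s (Quotient.mk t₀ v) = Φ0 (Quotient.mk t v) := rfl
    constructor
    · intro h; exact hinj (by rw [← h1, h]; rfl)
    · rintro rfl; rw [h1]; rfl
  have hset : (@Finset.filter _ (fun v => Quotient.mk t v = c) (fun _ => Classical.propDecidable _) Finset.univ) =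
      (@Finset.filter _ (fun w => Quotient.mk s w = Φ c) (fun _ => Classical.propDecidable _) Finset.univ).biUnion
        (fun w => @Finset.filter _ (fun v => Quotient.mk t₀ v = w) (fun _ => Classical.propDecidable _) Finset.univ) := by
    ext v
    simp only [Finset.mem_biUnion, Finset.mem_filter, Finset.mem_univ, true_and]
    constructor
    · intro h; exact ⟨Quotient.mk t₀ v, (hcond v).2 h, rfl⟩
    · rintro ⟨w, hw, rfl⟩; exact (hcond v).1 hw
  rw [hset, Finset.sum_biUnion]
  intro a _ b _ hab
  simp only [Finset.disjoint_left, Finset.mem_filter, Finset.mem_univ, true_and]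
  rintro v rfl h
  exact hab h

lemma prod_congr_setoid [AddCommMonoid S] [CommRing R] (t s : Setoid V) (h : t = s) (ω : V → S)
    [Fintype (Quotient t)] [Fintype (Quotient s)] :
    ∏ c : Quotient t, (MvPolynomial.X (∑ v ∈ @Finset.filter _ (fun v => Quotient.mk t v = c) (fun _ => Classical.propDecidable _) Finset.univ, ω v) : MvPolynomial S R) =
    ∏ c : Quotient s, MvPolynomial.X (∑ v ∈ @Finset.filter _ (fun v => Quotient.mk s v = c) (fun _ => Classical.propDecidable _) Finset.univ, ω v) := by
  subst h
  congr!

lemma eqvGen_mono (G : VGraph V E) {A B : Finset E} (h : A ⊆ B) {u v : V}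
    (huv : Relation.EqvGen (G.adjRel A) u v) : Relation.EqvGen (G.adjRel B) u v :=
  Relation.EqvGen.mono (fun a b ⟨f, hf, hff⟩ => ⟨f, h hf, hff⟩) _ _ huv

/-- embedding of edges avoiding e into E -/
def emb (e : E) : {f : E // f ≠ e} ↪ E := ⟨Subtype.val, Subtype.val_injective⟩

lemma del_setoid (G : VGraph V E) (e : E) (B : Finset {f : E // f ≠ e}) :
    G.compSetoid (B.map (emb e)) = (G.del e).compSetoid B := by
  apply Setoid.ext; intro u v
  show Relation.EqvGen _ u v ↔ Relation.EqvGen _ u v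
  have hadj : G.adjRel (B.map (emb e)) = (G.del e).adjRel B := by
    funext u v; apply propext
    constructor
    · rintro ⟨f, hf, hend⟩
      obtain ⟨g, hg, rfl⟩ := Finset.mem_map.1 hf
      exact ⟨g, hg, hend⟩
    · rintro ⟨f, hf, hend⟩
      exact ⟨f.1, Finset.mem_map_of_mem _ hf, hend⟩
  rw [hadj]

lemma connL (G : VGraph V E) (e : E) (B : Finset {f : E // f ≠ e}) {u v : V}
    (h : Quotient.mk (G.compSetoid {e}) u = Quotient.mk (G.compSetoid {e}) v) :
    Relation.EqvGen (G.adjRel (insert e (B.map (emb e)))) u v := by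
  have h' : Relation.EqvGen (G.adjRel {e}) u v := Quotient.exact h
  have hsub : ({e} : Finset E) ⊆ insert e (B.map (emb e)) := by
    intro x hx
    rw [Finset.mem_singleton] at hx
    rw [hx]
    exact Finset.mem_insert_self _ _
  exact eqvGen_mono G hsub h'

lemma contract_iff (G : VGraph V E) (e : E) (B : Finset {f : E // f ≠ e}) (u v : V) :
    (G.compSetoid (insert e (B.map (emb e)))).r u v ↔
      ((G.contract e).compSetoid B).r (Quotient.mk (G.compSetoid {e}) u)
        (Quotient.mk (G.compSetoid {e}) v) := by
  constructor
  · intro h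
    show Relation.EqvGen _ _ _
    induction h with
    | rel a b hab =>
      obtain ⟨f, hf, hend⟩ := hab
      rcases Finset.mem_insert.1 hf with hfe | hfB
      · have : Quotient.mk (G.compSetoid {e}) a = Quotient.mk (G.compSetoid {e}) b :=
          Quotient.sound (Relation.EqvGen.rel _ _
            ⟨f, by rw [Finset.mem_singleton]; exact hfe, hend⟩)
        rw [this]
        exact Relation.EqvGen.refl _
      · obtain ⟨g, hg, rfl⟩ := Finset.mem_map.1 hfB
        refine Relation.EqvGen.rel _ _ ⟨g, hg, ?_⟩
        show (G.ends g.1).map _ = _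
        rw [show G.ends g.1 = s(a, b) from hend]
        rfl
    | refl a => exact Relation.EqvGen.refl _
    | symm a b _ ih => exact Relation.EqvGen.symm _ _ ih
    | trans a b c _ _ ih1 ih2 => exact Relation.EqvGen.trans _ _ _ ih1 ih2
  · intro h
    have main : ∀ w w' : G.Comp {e}, Relation.EqvGen ((G.contract e).adjRel B) w w' →
        ∀ u v : V, Quotient.mk (G.compSetoid {e}) u = w → Quotient.mk (G.compSetoid {e}) v = w' →
        Relation.EqvGen (G.adjRel (insert e (B.map (emb e)))) u v := by
      intro w w' h
      induction h with
      | rel x y hxy =>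
        intro u v hu hv
        obtain ⟨f, hf, hend⟩ := hxy
        have hz : ∀ z : Sym2 V, ∃ a b : V, z = s(a, b) := Sym2.ind fun a b => ⟨a, b, rfl⟩
        obtain ⟨a, b, hab⟩ := hz (G.ends f.1)
        have hend' : s(Quotient.mk (G.compSetoid {e}) a, Quotient.mk (G.compSetoid {e}) b)
            = s(x, y) := by
          have h0 : (G.ends f.1).map (Quotient.mk (G.compSetoid {e})) = s(x, y) := hend
          rw [hab] at h0
          exact h0
        have hedge : Relation.EqvGen (G.adjRel (insert e (B.map (emb e)))) a b :=
          Relation.EqvGen.rel _ _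
            ⟨f.1, Finset.mem_insert_of_mem (Finset.mem_map_of_mem _ hf), hab⟩
        rcases Sym2.eq_iff.1 hend' with ⟨h1, h2⟩ | ⟨h1, h2⟩
        · exact Relation.EqvGen.trans _ _ _ (connL G e B (hu.trans h1.symm))
            (Relation.EqvGen.trans _ _ _ hedge (connL G e B (h2.trans hv.symm)))
        · exact Relation.EqvGen.trans _ _ _ (connL G e B (hu.trans h2.symm))
            (Relation.EqvGen.trans _ _ _ (Relation.EqvGen.symm _ _ hedge)
              (connL G e B (h1.trans hv.symm)))
      | refl x =>
        intro u v hu hv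
        exact connL G e B (hu.trans hv.symm)
      | symm x y _ ih =>
        intro u v hu hv
        exact Relation.EqvGen.symm _ _ (ih v u hv hu)
      | trans x y z _ _ ih1 ih2 =>
        intro u v hu hv
        obtain ⟨m, hm⟩ := Quotient.exists_rep y
        exact Relation.EqvGen.trans _ _ _ (ih1 u m hu hm) (ih2 m v hm hv)
    exact main _ _ h u v rfl rfl

lemma map_emb_subtype (e : E) (A : Finset E) (hA : ∀ x ∈ A, x ≠ e) :
    ((A.subtype (· ≠ e)).map (emb e)) = A := by
  rw [show (emb e) = Function.Embedding.subtype (· ≠ e) from rfl]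
  exact Finset.subtype_map_of_mem hA

end Aux


/-- Deletion–contraction for the V-polynomial at a non-loop edge:
`V(G) = V(G − e) + γ_e · V(G/e)`, where in `G/e` the merged vertex receives the sum
of the weights of the endpoints of `e`. -/
theorem Vpoly_deletion_contraction {V E S R : Type} [Fintype V] [Fintype E]
    [AddCommMonoid S] [CommRing R] (G : VGraph V E) (ω : V → S) (γ : E → R)
    (e : E) (he : ¬ G.IsLoop e) :
    G.Vpoly ω γ =
      (G.del e).Vpoly ω (fun f => γ f.1) +
        MvPolynomial.C (γ e) * (G.contract e).Vpoly (G.compWeight {e} ω) (fun f => γ f.1) := by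
  simp only [VGraph.Vpoly]
  rw [← Finset.sum_filter_add_sum_filter_not (Finset.univ : Finset (Finset E)) (fun A => e ∈ A)]
  have hdel : (∑ A ∈ Finset.univ.filter (fun A : Finset E => ¬ e ∈ A),
      (∏ c : G.Comp A, MvPolynomial.X (G.compWeight A ω c)) *
        MvPolynomial.C (∏ f ∈ A, γ f)) =
      ∑ B : Finset {f : E // f ≠ e},
      (∏ c : (G.del e).Comp B, MvPolynomial.X ((G.del e).compWeight B ω c)) *
        MvPolynomial.C (∏ f ∈ B, γ f.1) := by
    refine Finset.sum_bij' (fun A _ => A.subtype (· ≠ e)) (fun B _ => B.map (emb e))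
      ?_ ?_ ?_ ?_ ?_
    · intro A hA; exact Finset.mem_univ _
    · intro B _
      simp only [Finset.mem_filter, Finset.mem_univ, true_and]
      intro hmem
      obtain ⟨g, _, hge⟩ := Finset.mem_map.1 hmem
      exact g.2 hge
    · intro A hA
      simp only [Finset.mem_filter, Finset.mem_univ, true_and] at hA
      exact map_emb_subtype e A (fun x hx h => hA (h ▸ hx))
    · intro B _
      ext g
      simp only [Finset.mem_subtype, Finset.mem_map]
      constructor
      · rintro ⟨g', hg', hgg⟩
        rwa [show g' = g from Subtype.ext hgg] at hg'
      · intro hg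
        exact ⟨g, hg, rfl⟩
    · intro A hA
      simp only [Finset.mem_filter, Finset.mem_univ, true_and] at hA
      have hAeq : (A.subtype (· ≠ e)).map (emb e) = A :=
        map_emb_subtype e A (fun x hx h => hA (h ▸ hx))
      have hprod : ∏ f ∈ A.subtype (· ≠ e), γ f.1 = ∏ f ∈ A, γ f := by
        conv_rhs => rw [← hAeq]
        rw [Finset.prod_map]
        rfl
      rw [hprod]
      congr 1
      letI : Fintype (Quotient (G.compSetoid ((A.subtype (· ≠ e)).map (emb e)))) :=
        inferInstanceAs (Fintype (G.Comp _))
      letI : Fintype (Quotient ((G.del e).compSetoid (A.subtype (· ≠ e)))) :=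
        inferInstanceAs (Fintype ((G.del e).Comp _))
      have hkey := prod_congr_setoid (S := S) (R := R)
        (G.compSetoid ((A.subtype (· ≠ e)).map (emb e)))
        ((G.del e).compSetoid (A.subtype (· ≠ e)))
        (del_setoid G e _) ω
      have h1 : (∏ c : G.Comp A, MvPolynomial.X (G.compWeight A ω c) : MvPolynomial S R)
          = ∏ c : G.Comp ((A.subtype (· ≠ e)).map (emb e)),
              MvPolynomial.X (G.compWeight _ ω c) := by rw [hAeq]
      rw [h1]
      simp only [VGraph.compWeight, VGraph.compVerts]
      exact hkey
  have hcon : (∑ A ∈ Finset.univ.filter (fun A : Finset E => e ∈ A),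
      (∏ c : G.Comp A, MvPolynomial.X (G.compWeight A ω c)) *
        MvPolynomial.C (∏ f ∈ A, γ f)) =
      MvPolynomial.C (γ e) * ∑ B : Finset {f : E // f ≠ e},
      (∏ c : (G.contract e).Comp B,
        MvPolynomial.X ((G.contract e).compWeight B (G.compWeight {e} ω) c)) *
        MvPolynomial.C (∏ f ∈ B, γ f.1) := by
    rw [Finset.mul_sum]
    refine Finset.sum_bij' (fun A _ => (A.erase e).subtype (· ≠ e))
      (fun B _ => insert e (B.map (emb e))) ?_ ?_ ?_ ?_ ?_
    · intro A hA; exact Finset.mem_univ _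
    · intro B _
      simp only [Finset.mem_filter, Finset.mem_univ, true_and]
      exact Finset.mem_insert_self _ _
    · intro A hA
      simp only [Finset.mem_filter, Finset.mem_univ, true_and] at hA
      show insert e (((A.erase e).subtype (· ≠ e)).map (emb e)) = A
      rw [map_emb_subtype e _ (fun x hx => Finset.ne_of_mem_erase hx), Finset.insert_erase hA]
    · intro B _
      show Finset.subtype (· ≠ e) ((insert e (B.map (emb e))).erase e) = B
      ext g
      simp only [Finset.mem_subtype, Finset.mem_erase, Finset.mem_insert, Finset.mem_map]
      constructor
      · rintro ⟨-, hg | hg⟩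
        · exact absurd hg g.2
        · obtain ⟨g', hg', hgg⟩ := hg
          rwa [show g' = g from Subtype.ext hgg] at hg'
      · intro hg
        exact ⟨g.2, Or.inr ⟨g, hg, rfl⟩⟩
    · intro A hA
      simp only [Finset.mem_filter, Finset.mem_univ, true_and] at hA
      set B := (A.erase e).subtype (· ≠ e) with hB
      have h1 : B.map (emb e) = A.erase e :=
        map_emb_subtype e _ (fun x hx => Finset.ne_of_mem_erase hx)
      have hAeq : insert e (B.map (emb e)) = A := by rw [h1, Finset.insert_erase hA]
      have henotin : e ∉ B.map (emb e) := by rw [h1]; exact Finset.notMem_erase _ _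
      have hprod : ∏ f ∈ A, γ f = γ e * ∏ f ∈ B, γ f.1 := by
        conv_lhs => rw [← hAeq]
        rw [Finset.prod_insert henotin]
        congr 1
        rw [Finset.prod_map]
        rfl
      have hcomp : (∏ c : G.Comp A, MvPolynomial.X (G.compWeight A ω c) : MvPolynomial S R) =
          ∏ c : (G.contract e).Comp B,
            MvPolynomial.X ((G.contract e).compWeight B (G.compWeight {e} ω) c) := by
        have h2 : (∏ c : G.Comp A, MvPolynomial.X (G.compWeight A ω c) : MvPolynomial S R)
            = ∏ c : G.Comp (insert e (B.map (emb e))),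
                MvPolynomial.X (G.compWeight _ ω c) := by rw [hAeq]
        rw [h2]
        simp only [VGraph.compWeight, VGraph.compVerts]
        exact @key V S R _ _ _ (G.compSetoid {e})
          (G.compSetoid (insert e (B.map (emb e)))) ((G.contract e).compSetoid B)
          (G.instFintypeComp _) (contract_iff G e B) ω (G.instFintypeComp _)
          ((G.contract e).instFintypeComp _)
      rw [hprod, hcomp, MvPolynomial.C_mul]
      ring
  rw [hdel, hcon]
  ring
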